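/- arXiv:1710.02793 — 5 statements merged into one kernel-verified Lean document; each statement's English description precedes it below -/
import Mathlib

section
/- Chapman–Robbins bound for orbit estimation: for any alternative parameter pair (x̃, ρ̃) with φ_x(x̃) ≠ x, the covariance of the aligned estimator satisfies Cov[φ_x(X̂)] ⪰ z z^T / χ²(f^N_{x̃,ρ̃} || f^N_{x,ρ}), where z = E_{x̃,ρ̃}[φ_x(X̂)] − E_{x,ρ}[φ_x(X̂)]. -/
open MeasureTheory

/-- The chi-squared divergence `χ²(f_A ‖ f_B) = E_B[(f_A(B)/f_B(B) - 1)²]`. -/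
noncomputable def chiSq {α : Type*} [MeasureSpace α] (fA fB : α → ℝ) : ℝ :=
  ∫ y, (fA y / fB y - 1) ^ 2 * fB y

/-- The joint density of `N` i.i.d. samples with single-sample density `f`. -/
noncomputable def prodDensity {L : ℕ} (N : ℕ) (f : (Fin L → ℝ) → ℝ) :
    (Fin N → Fin L → ℝ) → ℝ :=
  fun y => ∏ j, f (y j)

private lemma sum_expand {L : ℕ} (v b c : Fin L → ℝ) (a : Fin L → Fin L → ℝ) (χ : ℝ) :
    ∑ i, v i * ∑ i', (a i i' - b i * b i' - (c i - b i) * (c i' - b i') / χ) * v i'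
    = (∑ i, ∑ i', v i * v i' * a i i') - (∑ i, v i * b i) ^ 2
        - (∑ i, v i * (c i - b i)) ^ 2 / χ := by
  rw [sq, Finset.sum_mul_sum, sq, Finset.sum_mul_sum]
  simp only [Finset.sum_div, Finset.mul_sum, ← Finset.sum_sub_distrib]
  refine Finset.sum_congr rfl fun i _ => Finset.sum_congr rfl fun i' _ => by ring

/-- Chapman–Robbins bound for orbit estimation.  `fB` is the single-sample
density `f_{x,ρ}` of the true parameters, `fA` the density `f_{x̃,ρ̃}` of an
alternative pair, and `φ` is the aligned estimator `φ_x(X̂)` as a function of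
the `N` observations.  Writing `z_i = E_{x̃,ρ̃}[φ_x(X̂)_i] - E_{x,ρ}[φ_x(X̂)_i]`
and `Cov` for the covariance matrix of `φ_x(X̂)` under the true parameters,
we have `Cov ⪰ z zᵀ / χ²(f^N_{x̃,ρ̃} ‖ f^N_{x,ρ})`. -/
theorem stmt_1 (L N : ℕ) (fA fB : (Fin L → ℝ) → ℝ)
    (hA0 : ∀ y, 0 ≤ fA y) (hB0 : ∀ y, 0 < fB y)
    (hA1 : ∫ y, fA y = 1) (hB1 : ∫ y, fB y = 1)
    (φ : (Fin N → Fin L → ℝ) → Fin L → ℝ)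
    (hint2 : ∀ i i', Integrable (fun y => φ y i * φ y i' * prodDensity N fB y))
    (hintA : ∀ i, Integrable (fun y => φ y i * prodDensity N fA y))
    (hintB : ∀ i, Integrable (fun y => φ y i * prodDensity N fB y))
    (hχ : 0 < chiSq (prodDensity N fA) (prodDensity N fB)) :
    Matrix.PosSemidef (Matrix.of fun i i' : Fin L =>
      -- Cov[φ_x(X̂)]_{i i'} minus (z zᵀ / χ²)_{i i'}
      ((∫ y, φ y i * φ y i' * prodDensity N fB y)
          - (∫ y, φ y i * prodDensity N fB y) * (∫ y, φ y i' * prodDensity N fB y))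
        - ((∫ y, φ y i * prodDensity N fA y) - (∫ y, φ y i * prodDensity N fB y))
            * ((∫ y, φ y i' * prodDensity N fA y) - (∫ y, φ y i' * prodDensity N fB y))
            / chiSq (prodDensity N fA) (prodDensity N fB)) := by
  set wA : (Fin N → Fin L → ℝ) → ℝ := prodDensity N fA with hwA
  set wB : (Fin N → Fin L → ℝ) → ℝ := prodDensity N fB with hwB
  have hwB0 : ∀ y, 0 < wB y := fun y => Finset.prod_pos fun j _ => hB0 _
  -- basic integrability and normalization
  have hIfA : Integrable fA := by
    by_contra h; rw [integral_undef h] at hA1; norm_num at hA1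
  have hIfB : Integrable fB := by
    by_contra h; rw [integral_undef h] at hB1; norm_num at hB1
  have hwAint : Integrable wA :=
    MeasureTheory.Integrable.fintype_prod (f := fun _ : Fin N => fA) fun _ => hIfA
  have hwBint : Integrable wB :=
    MeasureTheory.Integrable.fintype_prod (f := fun _ : Fin N => fB) fun _ => hIfB
  have hwA1 : ∫ y, wA y = 1 := by
    rw [show (fun y => wA y) = fun y : Fin N → Fin L → ℝ => ∏ j, fA (y j) from rfl,
      MeasureTheory.integral_fintype_prod_volume_eq_pow fA, hA1, one_pow]
  have hwB1 : ∫ y, wB y = 1 := by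
    rw [show (fun y => wB y) = fun y : Fin N → Fin L → ℝ => ∏ j, fB (y j) from rfl,
      MeasureTheory.integral_fintype_prod_volume_eq_pow fB, hB1, one_pow]
  set χ : ℝ := chiSq wA wB with hχdef
  have hχeq : χ = ∫ y, (wA y / wB y - 1) ^ 2 * wB y := rfl
  have hχint : Integrable (fun y => (wA y / wB y - 1) ^ 2 * wB y) := by
    by_contra h; rw [hχeq, integral_undef h] at hχ; norm_num at hχ
  rw [Matrix.posSemidef_iff_dotProduct_mulVec]
  constructor
  · -- Hermitian
    ext i i'
    simp only [Matrix.conjTranspose_apply, Matrix.of_apply, star_trivial]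
    rw [show (fun y => φ y i' * φ y i * wB y) = fun y => φ y i * φ y i' * wB y from
      funext fun y => by ring]
    ring
  · -- quadratic form
    intro v
    simp only [dotProduct, Matrix.mulVec, Matrix.of_apply, star_trivial, Pi.star_apply,
      RCLike.star_def, starRingEnd_apply]
    rw [sum_expand v (fun i => ∫ y, φ y i * wB y) (fun i => ∫ y, φ y i * wA y)
      (fun i i' => ∫ y, φ y i * φ y i' * wB y) χ]
    -- abbreviations
    set m : ℝ := ∑ i, v i * ∫ y, φ y i * wB y with hm
    set IA : ℝ := ∑ i, v i * ∫ y, φ y i * wA y with hIA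
    have hSsum : ∑ i, v i * ((∫ y, φ y i * wA y) - ∫ y, φ y i * wB y) = IA - m := by
      simp only [mul_sub, Finset.sum_sub_distrib, hm, hIA]
    rw [hSsum]
    set S : ℝ := IA - m with hS
    set t : ℝ := S / χ with ht
    -- pointwise identities
    have hptB : ∀ y, (∑ i, v i * φ y i) * wB y = ∑ i, v i * (φ y i * wB y) := fun y => by
      rw [Finset.sum_mul]; exact Finset.sum_congr rfl fun i _ => by ring
    have hptA : ∀ y, (∑ i, v i * φ y i) * wA y = ∑ i, v i * (φ y i * wA y) := fun y => by
      rw [Finset.sum_mul]; exact Finset.sum_congr rfl fun i _ => by ring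
    have hpt2 : ∀ y, (∑ i, v i * φ y i) ^ 2 * wB y
        = ∑ i, ∑ i', (v i * v i') * (φ y i * φ y i' * wB y) := fun y => by
      rw [sq, Finset.sum_mul_sum, Finset.sum_mul]
      exact Finset.sum_congr rfl fun i _ => by
        rw [Finset.sum_mul]; exact Finset.sum_congr rfl fun i' _ => by ring
    -- integrabilities
    have hgB : Integrable (fun y => (∑ i, v i * φ y i) * wB y) := by
      simp only [hptB]
      exact integrable_finset_sum _ fun i _ => (hintB i).const_mul (v i)
    have hgA : Integrable (fun y => (∑ i, v i * φ y i) * wA y) := by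
      simp only [hptA]
      exact integrable_finset_sum _ fun i _ => (hintA i).const_mul (v i)
    have hg2 : Integrable (fun y => (∑ i, v i * φ y i) ^ 2 * wB y) := by
      simp only [hpt2]
      exact integrable_finset_sum _ fun i _ =>
        integrable_finset_sum _ fun i' _ => (hint2 i i').const_mul _
    -- integral identities
    have hImB : ∫ y, (∑ i, v i * φ y i) * wB y = m := by
      simp only [hptB]
      rw [integral_finset_sum _ fun i _ => (hintB i).const_mul (v i)]
      exact Finset.sum_congr rfl fun i _ => integral_const_mul _ _
    have hImA : ∫ y, (∑ i, v i * φ y i) * wA y = IA := by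
      simp only [hptA]
      rw [integral_finset_sum _ fun i _ => (hintA i).const_mul (v i)]
      exact Finset.sum_congr rfl fun i _ => integral_const_mul _ _
    have hI2 : ∫ y, (∑ i, v i * φ y i) ^ 2 * wB y
        = ∑ i, ∑ i', v i * v i' * ∫ y, φ y i * φ y i' * wB y := by
      simp only [hpt2]
      rw [integral_finset_sum _ fun i _ =>
        integrable_finset_sum _ fun i' _ => (hint2 i i').const_mul _]
      exact Finset.sum_congr rfl fun i _ => by
        rw [integral_finset_sum _ fun i' _ => (hint2 i i').const_mul _]
        exact Finset.sum_congr rfl fun i' _ => integral_const_mul _ _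
    -- the key nonnegative integral
    have hF : 0 ≤ ∫ y, (((∑ i, v i * φ y i) - m) - t * (wA y / wB y - 1)) ^ 2 * wB y :=
      integral_nonneg fun y => mul_nonneg (sq_nonneg _) (hwB0 y).le
    have hFeq : (fun y => (((∑ i, v i * φ y i) - m) - t * (wA y / wB y - 1)) ^ 2 * wB y)
        = fun y => ((∑ i, v i * φ y i) ^ 2 * wB y)
            + ((-(2 * m)) * ((∑ i, v i * φ y i) * wB y))
            + (m ^ 2 * wB y)
            + ((-(2 * t)) * ((∑ i, v i * φ y i) * wA y))
            + ((2 * t) * ((∑ i, v i * φ y i) * wB y))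
            + ((2 * t * m) * wA y)
            + ((-(2 * t) * m) * wB y)
            + (t ^ 2 * ((wA y / wB y - 1) ^ 2 * wB y)) := by
      funext y
      have hne : wB y ≠ 0 := (hwB0 y).ne'
      field_simp
      ring
    have i1 := hg2
    have i2 : Integrable (fun y => (-(2 * m)) * ((∑ i, v i * φ y i) * wB y)) := hgB.const_mul _
    have i3 : Integrable (fun y => m ^ 2 * wB y) := hwBint.const_mul _
    have i4 : Integrable (fun y => (-(2 * t)) * ((∑ i, v i * φ y i) * wA y)) := hgA.const_mul _
    have i5 : Integrable (fun y => (2 * t) * ((∑ i, v i * φ y i) * wB y)) := hgB.const_mul _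
    have i6 : Integrable (fun y => (2 * t * m) * wA y) := hwAint.const_mul _
    have i7 : Integrable (fun y => (-(2 * t) * m) * wB y) := hwBint.const_mul _
    have i8 : Integrable (fun y => t ^ 2 * ((wA y / wB y - 1) ^ 2 * wB y)) := hχint.const_mul _
    have e2 : Integrable (fun y => (∑ i, v i * φ y i) ^ 2 * wB y
        + (-(2 * m)) * ((∑ i, v i * φ y i) * wB y)) := i1.add i2
    have e3 : Integrable (fun y => (∑ i, v i * φ y i) ^ 2 * wB y
        + (-(2 * m)) * ((∑ i, v i * φ y i) * wB y) + m ^ 2 * wB y) := e2.add i3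
    have e4 : Integrable (fun y => (∑ i, v i * φ y i) ^ 2 * wB y
        + (-(2 * m)) * ((∑ i, v i * φ y i) * wB y) + m ^ 2 * wB y
        + (-(2 * t)) * ((∑ i, v i * φ y i) * wA y)) := e3.add i4
    have e5 : Integrable (fun y => (∑ i, v i * φ y i) ^ 2 * wB y
        + (-(2 * m)) * ((∑ i, v i * φ y i) * wB y) + m ^ 2 * wB y
        + (-(2 * t)) * ((∑ i, v i * φ y i) * wA y)
        + (2 * t) * ((∑ i, v i * φ y i) * wB y)) := e4.add i5
    have e6 : Integrable (fun y => (∑ i, v i * φ y i) ^ 2 * wB y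
        + (-(2 * m)) * ((∑ i, v i * φ y i) * wB y) + m ^ 2 * wB y
        + (-(2 * t)) * ((∑ i, v i * φ y i) * wA y)
        + (2 * t) * ((∑ i, v i * φ y i) * wB y)
        + (2 * t * m) * wA y) := e5.add i6
    have e7 : Integrable (fun y => (∑ i, v i * φ y i) ^ 2 * wB y
        + (-(2 * m)) * ((∑ i, v i * φ y i) * wB y) + m ^ 2 * wB y
        + (-(2 * t)) * ((∑ i, v i * φ y i) * wA y)
        + (2 * t) * ((∑ i, v i * φ y i) * wB y)
        + (2 * t * m) * wA y
        + (-(2 * t) * m) * wB y) := e6.add i7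
    have hFval : ∫ y, (((∑ i, v i * φ y i) - m) - t * (wA y / wB y - 1)) ^ 2 * wB y
        = (∑ i, ∑ i', v i * v i' * ∫ y, φ y i * φ y i' * wB y)
            - m ^ 2 - 2 * t * S + t ^ 2 * χ := by
      rw [hFeq,
        integral_add e7 i8,
        integral_add e6 i7,
        integral_add e5 i6,
        integral_add e4 i5,
        integral_add e3 i4,
        integral_add e2 i3,
        integral_add i1 i2]
      simp only [integral_const_mul]
      rw [hI2, hImB, hImA, hwA1, hwB1, ← hχeq]
      ring
    have hfinal : 2 * t * S - t ^ 2 * χ = S ^ 2 / χ := by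
      rw [ht]; field_simp; ring
    have := hF
    rw [hFval] at this
    linarith
end

section
/- In the Fourier domain, the conjugated second moment satisfies F M² F^{-1} = (1/L) D_{Fx} C_{Fρ} D_{conj(Fx)}; in particular, the k-th diagonal entry of F M² F^{-1} equals (1/L)·|（Fx)[k]|², so the power spectrum of x satisfies P_x = L · diag(F M² F^{-1}). -/
open Matrix Finset

/-- The discrete Fourier transform `(Fx)[k] = Σ_i x[i] e^{-2πι k i / L}`. -/
noncomputable def dft {L : ℕ} [NeZero L] (x : ZMod L → ℂ) (k : ZMod L) : ℂ :=
  ∑ i : ZMod L, x i *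
    Complex.exp (-(2 * (Real.pi : ℂ) * Complex.I * (k.val : ℂ) * (i.val : ℂ)) / (L : ℂ))

/-- The DFT of a real signal. -/
noncomputable def dftR {L : ℕ} [NeZero L] (x : ZMod L → ℝ) (k : ZMod L) : ℂ :=
  dft (fun i => (x i : ℂ)) k


set_option linter.unusedSectionVars false


namespace Stmt4Aux

variable {L : ℕ} [NeZero L]

noncomputable def zeta (L : ℕ) : ℂ := Complex.exp (-(2 * (Real.pi : ℂ) * Complex.I) / L)

lemma hprim (L : ℕ) [NeZero L] : IsPrimitiveRoot (zeta L) L := by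
  have h := (Complex.isPrimitiveRoot_exp L (NeZero.ne L)).inv
  convert h using 1
  · rfl
  rw [zeta, ← Complex.exp_neg]
  ring_nf

lemma zeta_pow_L : zeta L ^ L = 1 := (hprim L).pow_eq_one

noncomputable def chi (c : ZMod L) : ℂ := zeta L ^ c.val

lemma chi_zero : chi (0 : ZMod L) = 1 := by simp [chi]

lemma pow_val_mod (n : ℕ) : zeta L ^ (n % L) = zeta L ^ n := by
  conv_rhs => rw [← Nat.div_add_mod n L]
  rw [pow_add, pow_mul, zeta_pow_L, one_pow, one_mul]

lemma chi_add (a b : ZMod L) : chi (a + b) = chi a * chi b := by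
  rw [chi, chi, chi, ZMod.val_add, pow_val_mod, pow_add]

lemma chi_mul_val (a b : ZMod L) : chi (a * b) = zeta L ^ (a.val * b.val) := by
  rw [chi, ZMod.val_mul, pow_val_mod]

lemma exp_eq (k i : ZMod L) :
    Complex.exp (-(2 * (Real.pi : ℂ) * Complex.I * (k.val : ℂ) * (i.val : ℂ)) / (L : ℂ))
      = chi (k * i) := by
  rw [chi_mul_val]
  rw [show (-(2 * (Real.pi : ℂ) * Complex.I * (k.val : ℂ) * (i.val : ℂ)) / (L : ℂ))
      = ((k.val * i.val : ℕ) : ℂ) * (-(2 * (Real.pi : ℂ) * Complex.I) / L) by push_cast; ring,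
    Complex.exp_nat_mul]
  rfl

lemma chi_neg_mul (c : ZMod L) : chi (-c) * chi c = 1 := by
  rw [← chi_add, neg_add_cancel, chi_zero]

lemma conj_chi (c : ZMod L) : (starRingEnd ℂ) (chi c) = chi (-c) := by
  have habs : ‖chi c‖ = 1 := by
    rw [chi, norm_pow, zeta,
      show (-(2 * (Real.pi : ℂ) * Complex.I) / L)
        = (((-(2 * Real.pi) / L) : ℝ) : ℂ) * Complex.I by push_cast; ring,
      Complex.norm_exp_ofReal_mul_I, one_pow]
  have h1 : chi c * (starRingEnd ℂ) (chi c) = 1 := by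
    rw [Complex.mul_conj, Complex.normSq_eq_norm_sq, habs]; norm_num
  have h2 : chi c * chi (-c) = 1 := by rw [mul_comm]; exact chi_neg_mul c
  have hc : chi c ≠ 0 := fun h => by simp [h] at h1
  field_simp at h1 h2
  rw [← h2] at h1
  exact mul_left_cancel₀ hc h1

lemma sum_val_reindex (f : ℕ → ℂ) : ∑ i : ZMod L, f i.val = ∑ j ∈ range L, f j := by
  apply Finset.sum_nbij' (fun i : ZMod L => i.val) (fun j : ℕ => (j : ZMod L))
  · intro a _; exact mem_range.mpr (ZMod.val_lt a)
  · intro a _; exact mem_univ _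
  · intro a _; exact ZMod.natCast_zmod_val a
  · intro a ha; exact ZMod.val_cast_of_lt (mem_range.mp ha)
  · intro a _; rfl

lemma sum_chi (c : ZMod L) :
    ∑ i : ZMod L, chi (c * i) = if c = 0 then (L : ℂ) else 0 := by
  have : ∀ i : ZMod L, chi (c * i) = (zeta L ^ c.val) ^ i.val := by
    intro i; rw [chi_mul_val, pow_mul]
  simp_rw [this]
  rw [sum_val_reindex (fun n => (zeta L ^ c.val) ^ n)]
  by_cases hc : c = 0
  · simp [hc]
  · rw [if_neg hc]
    have hne1 : zeta L ^ c.val ≠ 1 := by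
      apply (hprim L).pow_ne_one_of_pos_of_lt
      · exact fun h => hc ((ZMod.val_eq_zero c).mp h)
      · exact ZMod.val_lt c
    rw [geom_sum_eq hne1]
    rw [← pow_mul, mul_comm c.val L, pow_mul, zeta_pow_L, one_pow]
    simp

end Stmt4Aux

namespace Stmt4Aux
set_option linter.unusedSectionVars false
variable {L : ℕ} [NeZero L]

lemma dftR_eq (x : ZMod L → ℝ) (k : ZMod L) :
    dftR x k = ∑ i : ZMod L, (x i : ℂ) * chi (k * i) := by
  unfold dftR dft
  exact Finset.sum_congr rfl fun i _ => by rw [exp_eq]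

lemma conj_dftR (x : ZMod L → ℝ) (k : ZMod L) :
    (starRingEnd ℂ) (dftR x k) = ∑ i : ZMod L, (x i : ℂ) * chi (-(k * i)) := by
  rw [dftR_eq, map_sum]
  exact Finset.sum_congr rfl fun i _ => by rw [RingHom.map_mul, conj_chi, Complex.conj_ofReal]

lemma lemA (x : ZMod L → ℝ) (k s : ZMod L) :
    ∑ i : ZMod L, chi (k * i) * (x (i - s) : ℂ) = chi (k * s) * dftR x k := by
  have h : ∑ i : ZMod L, chi (k * (i + s)) * (x i : ℂ)
      = ∑ i : ZMod L, chi (k * i) * (x (i - s) : ℂ) := by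
    apply Fintype.sum_equiv (Equiv.addRight s)
    intro i; simp [Equiv.coe_addRight, add_sub_cancel_right]
  rw [← h, dftR_eq, Finset.mul_sum]
  apply Finset.sum_congr rfl
  intro i _
  rw [mul_add, chi_add]; ring

lemma lemB (x : ZMod L → ℝ) (l s : ZMod L) :
    ∑ j : ZMod L, chi (-(j * l)) * (x (j - s) : ℂ)
      = chi (-(s * l)) * (starRingEnd ℂ) (dftR x l) := by
  have h : ∑ j : ZMod L, chi (-((j + s) * l)) * (x j : ℂ)
      = ∑ j : ZMod L, chi (-(j * l)) * (x (j - s) : ℂ) := by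
    apply Fintype.sum_equiv (Equiv.addRight s)
    intro j; simp [Equiv.coe_addRight, add_sub_cancel_right]
  rw [← h, conj_dftR, Finset.mul_sum]
  apply Finset.sum_congr rfl
  intro j _
  rw [show -((j + s) * l) = -(j * l) + -(s * l) by ring, chi_add,
    show -(l * j) = -(j * l) by ring]
  ring

lemma hL_ne (L : ℕ) [NeZero L] : (L : ℂ) ≠ 0 := Nat.cast_ne_zero.mpr (NeZero.ne L)

lemma Finv :
    (Matrix.of fun k i : ZMod L => chi (k * i))⁻¹
      = Matrix.of fun i l : ZMod L => (L : ℂ)⁻¹ * chi (-(i * l)) := by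
  apply Matrix.inv_eq_right_inv
  ext k l
  rw [Matrix.mul_apply]
  simp only [Matrix.of_apply]
  have : ∀ i : ZMod L, chi (k * i) * ((L : ℂ)⁻¹ * chi (-(i * l)))
      = (L : ℂ)⁻¹ * chi ((k - l) * i) := by
    intro i
    rw [show (k - l) * i = k * i + -(i * l) by ring, chi_add]
    ring
  simp_rw [this]
  rw [← Finset.mul_sum, sum_chi, Matrix.one_apply]
  by_cases hkl : k = l
  · simp [hkl, sub_self, inv_mul_cancel₀ (hL_ne L)]
  · rw [if_neg hkl, if_neg (sub_ne_zero_of_ne hkl), mul_zero]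

lemma reorder (f : ZMod L → ZMod L → ZMod L → ℂ) :
    ∑ j : ZMod L, ∑ i : ZMod L, ∑ s : ZMod L, f j i s
      = ∑ s : ZMod L, ∑ i : ZMod L, ∑ j : ZMod L, f j i s := by
  calc ∑ j : ZMod L, ∑ i : ZMod L, ∑ s : ZMod L, f j i s
      = ∑ i : ZMod L, ∑ j : ZMod L, ∑ s : ZMod L, f j i s := Finset.sum_comm
    _ = ∑ i : ZMod L, ∑ s : ZMod L, ∑ j : ZMod L, f j i s :=
        Finset.sum_congr rfl fun i _ => Finset.sum_comm
    _ = ∑ s : ZMod L, ∑ i : ZMod L, ∑ j : ZMod L, f j i s := Finset.sum_comm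

lemma entry (x ρ : ZMod L → ℝ) (k l : ZMod L) :
    ((Matrix.of fun k i : ZMod L => chi (k * i))
        * (Matrix.of fun i j : ZMod L => ((∑ s, ρ s * (x (i - s) * x (j - s)) : ℝ) : ℂ))
        * (Matrix.of fun i l : ZMod L => (L : ℂ)⁻¹ * chi (-(i * l)))) k l
      = (L : ℂ)⁻¹ * (dftR x k * (dftR ρ (k - l) * (starRingEnd ℂ) (dftR x l))) := by
  have claim : ((Matrix.of fun k i : ZMod L => chi (k * i))
        * (Matrix.of fun i j : ZMod L => ((∑ s, ρ s * (x (i - s) * x (j - s)) : ℝ) : ℂ))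
        * (Matrix.of fun i l : ZMod L => (L : ℂ)⁻¹ * chi (-(i * l)))) k l
      = (L : ℂ)⁻¹ * ∑ s : ZMod L, (ρ s : ℂ) *
          ((∑ i : ZMod L, chi (k * i) * (x (i - s) : ℂ))
            * (∑ j : ZMod L, chi (-(j * l)) * (x (j - s) : ℂ))) := by
    simp only [Matrix.mul_apply, Matrix.of_apply]
    push_cast
    simp only [Finset.sum_mul, Finset.mul_sum]
    rw [reorder]
    refine Finset.sum_congr rfl fun s _ => ?_
    rw [Finset.sum_comm]
    refine Finset.sum_congr rfl fun i _ => Finset.sum_congr rfl fun j _ => ?_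
    ring
  rw [claim]
  have : ∀ s : ZMod L, (ρ s : ℂ) *
      ((∑ i : ZMod L, chi (k * i) * (x (i - s) : ℂ))
        * (∑ j : ZMod L, chi (-(j * l)) * (x (j - s) : ℂ)))
      = (dftR x k * (starRingEnd ℂ) (dftR x l)) * ((ρ s : ℂ) * chi ((k - l) * s)) := by
    intro s
    rw [lemA, lemB, show (k - l) * s = k * s + -(s * l) by ring, chi_add]
    ring
  simp_rw [this]
  rw [← Finset.mul_sum, ← dftR_eq]
  ring

end Stmt4Aux


open Stmt4Aux in
/-- In the Fourier domain, the conjugated second moment satisfies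
`F M² F⁻¹ = (1/L) D_{Fx} C_{Fρ} D_{conj(Fx)}`; in particular the `k`-th diagonal
entry of `F M² F⁻¹` equals `(1/L)|(Fx)[k]|²`, so the power spectrum satisfies
`P_x = L · diag(F M² F⁻¹)`. -/
theorem stmt_4 (L : ℕ) [NeZero L] (x ρ : ZMod L → ℝ)
    (hρ0 : ∀ s, 0 ≤ ρ s) (hρ1 : ∑ s, ρ s = 1) :
    (Matrix.of fun k i : ZMod L =>
        Complex.exp (-(2 * (Real.pi : ℂ) * Complex.I * (k.val : ℂ) * (i.val : ℂ)) / (L : ℂ)))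
      * (Matrix.of fun i j : ZMod L => ((∑ s, ρ s * (x (i - s) * x (j - s)) : ℝ) : ℂ))
      * (Matrix.of fun k i : ZMod L =>
          Complex.exp (-(2 * (Real.pi : ℂ) * Complex.I * (k.val : ℂ) * (i.val : ℂ)) / (L : ℂ)))⁻¹
    = ((L : ℂ))⁻¹ •
        (Matrix.diagonal (dftR x) * Matrix.circulant (dftR ρ)
          * Matrix.diagonal (fun k => starRingEnd ℂ (dftR x k)))
    ∧ ∀ k : ZMod L,
        ((‖dftR x k‖ ^ 2 : ℝ) : ℂ)
          = (L : ℂ) *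
            ((Matrix.of fun k i : ZMod L =>
                Complex.exp (-(2 * (Real.pi : ℂ) * Complex.I * (k.val : ℂ) * (i.val : ℂ)) / (L : ℂ)))
              * (Matrix.of fun i j : ZMod L => ((∑ s, ρ s * (x (i - s) * x (j - s)) : ℝ) : ℂ))
              * (Matrix.of fun k i : ZMod L =>
                  Complex.exp (-(2 * (Real.pi : ℂ) * Complex.I * (k.val : ℂ) * (i.val : ℂ)) / (L : ℂ)))⁻¹) k k := by
  
  have hFeq : (Matrix.of fun k i : ZMod L =>
      Complex.exp (-(2 * (Real.pi : ℂ) * Complex.I * (k.val : ℂ) * (i.val : ℂ)) / (L : ℂ)))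
      = Matrix.of fun k i : ZMod L => chi (k * i) := by
    ext k i; exact exp_eq k i
  have hρdft : dftR ρ (0 : ZMod L) = 1 := by
    rw [dftR_eq]
    simp only [zero_mul, chi_zero, mul_one]
    rw [← Complex.ofReal_sum, hρ1, Complex.ofReal_one]
  rw [hFeq, Finv]
  constructor
  · ext k l
    rw [entry]
    rw [Matrix.smul_apply, Matrix.mul_diagonal, Matrix.diagonal_mul, Matrix.circulant_apply,
      smul_eq_mul]
    ring
  · intro k
    rw [entry, sub_self, hρdft, one_mul, Complex.sq_norm, Complex.mul_conj,
      mul_inv_cancel_left₀ (hL_ne L)]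
end

section
/- If ρ is an aperiodic distribution on ℤ_L and θ is drawn from an absolutely continuous probability measure on the simplex Δ^L, then with probability 1 all L entries of the circular convolution ρ ∗ θ are pairwise distinct. -/
open MeasureTheory

/-- A distribution on `ℤ_L` is aperiodic if no nonzero shift leaves it invariant. -/
def Aperiodic {L : ℕ} (ρ : ZMod L → ℝ) : Prop :=
  ¬ ∃ ℓ : ZMod L, ℓ ≠ 0 ∧ ∀ k, ρ (k + ℓ) = ρ k

/-- If `ρ` is an aperiodic distribution and `θ` is drawn from an absolutely
continuous probability measure `μ` on the simplex (formalized by: `μ` lives on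
the simplex and assigns measure zero to every proper linear hyperplane), then
with probability 1 all entries of the circular convolution `ρ ∗ θ` are
pairwise distinct. -/
theorem stmt_7 (L : ℕ) [NeZero L] (ρ : ZMod L → ℝ)
    (hρ0 : ∀ s, 0 ≤ ρ s) (hρ1 : ∑ s, ρ s = 1)
    (haper : Aperiodic ρ)
    (μ : Measure (ZMod L → ℝ)) [IsProbabilityMeasure μ]
    (hsupp : ∀ᵐ θ ∂μ, (∀ i, 0 ≤ θ i) ∧ ∑ i, θ i = 1)
    (hac : ∀ c : ZMod L → ℝ, c ≠ 0 → μ {θ | ∑ i, c i * θ i = 0} = 0) :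
    μ {θ | ∃ i j : ZMod L, i ≠ j ∧
        (∑ ℓ, ρ ℓ * θ (i - ℓ)) = ∑ ℓ, ρ ℓ * θ (j - ℓ)} = 0 := by
  have key : ∀ i j : ZMod L, i ≠ j →
      μ {θ : ZMod L → ℝ | (∑ ℓ, ρ ℓ * θ (i - ℓ)) = ∑ ℓ, ρ ℓ * θ (j - ℓ)} = 0 := by
    intro i j hij
    set c : ZMod L → ℝ := fun k => ρ (i - k) - ρ (j - k) with hc
    have hcne : c ≠ 0 := by
      intro h
      apply haper
      refine ⟨j - i, ?_, ?_⟩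
      · intro h0
        apply hij
        exact (sub_eq_zero.mp h0).symm
      · intro k
        have hk := congrFun h (i - k)
        simp only [hc, Pi.zero_apply] at hk
        have : ρ (i - (i - k)) = ρ (j - (i - k)) := by linarith
        simpa [sub_sub_cancel, show j - (i - k) = k + (j - i) by ring] using this.symm
    have hsub : {θ : ZMod L → ℝ | (∑ ℓ, ρ ℓ * θ (i - ℓ)) = ∑ ℓ, ρ ℓ * θ (j - ℓ)}
        ⊆ {θ | ∑ k, c k * θ k = 0} := by
      intro θ hθ
      simp only [Set.mem_setOf_eq] at hθ ⊢
      have h1 : (∑ ℓ, ρ ℓ * θ (i - ℓ)) = ∑ k, ρ (i - k) * θ k := by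
        refine Fintype.sum_equiv (Equiv.subLeft i) _ _ ?_
        intro ℓ; simp [Equiv.subLeft, sub_sub_cancel]
      have h2 : (∑ ℓ, ρ ℓ * θ (j - ℓ)) = ∑ k, ρ (j - k) * θ k := by
        refine Fintype.sum_equiv (Equiv.subLeft j) _ _ ?_
        intro ℓ; simp [Equiv.subLeft, sub_sub_cancel]
      simp only [hc, sub_mul, Finset.sum_sub_distrib]
      rw [← h1, ← h2, hθ, sub_self]
    exact measure_mono_null hsub (hac c hcne)
  have hcover : {θ : ZMod L → ℝ | ∃ i j : ZMod L, i ≠ j ∧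
        (∑ ℓ, ρ ℓ * θ (i - ℓ)) = ∑ ℓ, ρ ℓ * θ (j - ℓ)}
      ⊆ ⋃ i : ZMod L, ⋃ j : ZMod L,
        {θ : ZMod L → ℝ | i ≠ j ∧ (∑ ℓ, ρ ℓ * θ (i - ℓ)) = ∑ ℓ, ρ ℓ * θ (j - ℓ)} := by
    rintro θ ⟨i, j, h⟩
    exact Set.mem_iUnion.mpr ⟨i, Set.mem_iUnion.mpr ⟨j, h⟩⟩
  refine measure_mono_null hcover ?_
  refine measure_iUnion_null fun i => measure_iUnion_null fun j => ?_
  by_cases hij : i = j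
  · simp [hij]
  · exact measure_mono_null (fun θ hθ => hθ.2) (key i j hij)
end

section
/- Bound on the second-order directional derivative of the moment tensor: for x ∈ ℝ^L, aperiodic considerations aside, let z = x − ((𝟙^T x)/L)𝟙 and θ = (1/L)𝟙 − ρ, and v = (z, θ). Then the first-order directional derivative of M¹_{x,ρ} along v vanishes, and ‖∇_v M²_{x,ρ}‖² ≤ 4 ‖z‖² ‖x‖². -/
/-- Directional-derivative bound for the moment tensors: with the centering
perturbation `z = x - ((𝟙ᵀx)/L)𝟙`, `θ = (1/L)𝟙 - ρ` and `v = (z, θ)`, the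
first-order directional derivative of `M¹_{x,ρ}` along `v` vanishes, and
`‖∇_v M²_{x,ρ}‖² ≤ 4 ‖z‖² ‖x‖²`. -/
theorem stmt_15 (L : ℕ) [NeZero L] (x ρ : ZMod L → ℝ)
    (hρ0 : ∀ s, 0 ≤ ρ s) (hρ1 : ∑ s, ρ s = 1) :
    (∀ k : ZMod L,
      (∑ ℓ, ((1 / (L : ℝ) - ρ ℓ) * x (k - ℓ)
        + ρ ℓ * (x (k - ℓ) - (∑ j, x j) / (L : ℝ)))) = 0)
    ∧ (∑ k₁ : ZMod L, ∑ k₂ : ZMod L,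
        (∑ ℓ, ((1 / (L : ℝ) - ρ ℓ) * (x (k₁ - ℓ) * x (k₂ - ℓ))
          + ρ ℓ * ((x (k₁ - ℓ) - (∑ j, x j) / (L : ℝ)) * x (k₂ - ℓ)
            + x (k₁ - ℓ) * (x (k₂ - ℓ) - (∑ j, x j) / (L : ℝ))))) ^ 2)
      ≤ 4 * (∑ i, (x i - (∑ j, x j) / (L : ℝ)) ^ 2) * (∑ i, x i ^ 2) := by
  have hL : (0:ℝ) < L := by
    exact_mod_cast Nat.pos_of_ne_zero (NeZero.ne L)
  set m : ℝ := (∑ j, x j) / (L : ℝ) with hm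
  set z : ZMod L → ℝ := fun i => x i - m with hzdef
  set w : ZMod L → ℝ := fun ℓ => 1 / (L : ℝ) + ρ ℓ with hwdef
  have hcard : (Finset.univ : Finset (ZMod L)).card = L := by
    simp [ZMod.card]
  have hshift : ∀ (f : ZMod L → ℝ) (k : ZMod L), ∑ ℓ, f (k - ℓ) = ∑ j, f j := by
    intro f k
    exact Fintype.sum_equiv (Equiv.subLeft k) _ _ (fun ℓ => rfl)
  have hsumx : ∑ j, x j = (L : ℝ) * m := by
    rw [hm]; field_simp
  have hz0 : ∑ j, z j = 0 := by
    rw [hzdef]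
    simp only
    rw [Finset.sum_sub_distrib, Finset.sum_const, hcard, hsumx, nsmul_eq_mul]
    ring
  have hzshift0 : ∀ k : ZMod L, ∑ ℓ, z (k - ℓ) = 0 := fun k => by
    rw [hshift z k, hz0]
  have hwsum : ∑ ℓ, w ℓ = 2 := by
    rw [hwdef]
    simp only
    rw [Finset.sum_add_distrib, Finset.sum_const, hcard, nsmul_eq_mul, hρ1]
    field_simp
    norm_num
  have hw0 : ∀ ℓ, 0 ≤ w ℓ := fun ℓ => by
    have := hρ0 ℓ
    rw [hwdef]
    positivity
  constructor
  · intro k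
    have expand : ∀ ℓ : ZMod L,
        (1 / (L : ℝ) - ρ ℓ) * x (k - ℓ) + ρ ℓ * (x (k - ℓ) - m)
          = (1 / (L : ℝ)) * z (k - ℓ) + m * (1 / (L : ℝ)) - m * ρ ℓ := fun ℓ => by
      simp only [hzdef]; ring
    calc ∑ ℓ, ((1 / (L : ℝ) - ρ ℓ) * x (k - ℓ) + ρ ℓ * (x (k - ℓ) - m))
        = ∑ ℓ, ((1 / (L : ℝ)) * z (k - ℓ) + m * (1 / (L : ℝ)) - m * ρ ℓ) := by
          exact Finset.sum_congr rfl fun ℓ _ => expand ℓ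
      _ = (1 / (L : ℝ)) * (∑ ℓ, z (k - ℓ)) + (L : ℝ) * (m * (1 / (L : ℝ)))
            - m * (∑ ℓ, ρ ℓ) := by
          rw [Finset.sum_sub_distrib, Finset.sum_add_distrib, Finset.sum_const, hcard,
            nsmul_eq_mul, ← Finset.mul_sum, ← Finset.mul_sum]
      _ = 0 := by rw [hzshift0 k, hρ1]; field_simp; ring
  · -- second part
    have key : ∀ k₁ k₂ : ZMod L,
        (∑ ℓ, ((1 / (L : ℝ) - ρ ℓ) * (x (k₁ - ℓ) * x (k₂ - ℓ))
          + ρ ℓ * ((x (k₁ - ℓ) - m) * x (k₂ - ℓ) + x (k₁ - ℓ) * (x (k₂ - ℓ) - m))))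
        = ∑ ℓ, w ℓ * (z (k₁ - ℓ) * z (k₂ - ℓ)) := by
      intro k₁ k₂
      have expand : ∀ ℓ : ZMod L,
          (1 / (L : ℝ) - ρ ℓ) * (x (k₁ - ℓ) * x (k₂ - ℓ))
            + ρ ℓ * ((x (k₁ - ℓ) - m) * x (k₂ - ℓ) + x (k₁ - ℓ) * (x (k₂ - ℓ) - m))
          = w ℓ * (z (k₁ - ℓ) * z (k₂ - ℓ))
            + (m / (L : ℝ)) * z (k₁ - ℓ) + (m / (L : ℝ)) * z (k₂ - ℓ)
            + m ^ 2 * (1 / (L : ℝ)) - m ^ 2 * ρ ℓ := fun ℓ => by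
        simp only [hzdef, hwdef]; ring
      calc (∑ ℓ, ((1 / (L : ℝ) - ρ ℓ) * (x (k₁ - ℓ) * x (k₂ - ℓ))
            + ρ ℓ * ((x (k₁ - ℓ) - m) * x (k₂ - ℓ) + x (k₁ - ℓ) * (x (k₂ - ℓ) - m))))
          = ∑ ℓ, (w ℓ * (z (k₁ - ℓ) * z (k₂ - ℓ))
              + (m / (L : ℝ)) * z (k₁ - ℓ) + (m / (L : ℝ)) * z (k₂ - ℓ)
              + m ^ 2 * (1 / (L : ℝ)) - m ^ 2 * ρ ℓ) :=
            Finset.sum_congr rfl fun ℓ _ => expand ℓ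
        _ = (∑ ℓ, w ℓ * (z (k₁ - ℓ) * z (k₂ - ℓ)))
              + (m / (L : ℝ)) * (∑ ℓ, z (k₁ - ℓ)) + (m / (L : ℝ)) * (∑ ℓ, z (k₂ - ℓ))
              + (L : ℝ) * (m ^ 2 * (1 / (L : ℝ))) - m ^ 2 * (∑ ℓ, ρ ℓ) := by
            rw [Finset.sum_sub_distrib, Finset.sum_add_distrib, Finset.sum_add_distrib,
              Finset.sum_add_distrib, Finset.sum_const, hcard, nsmul_eq_mul,
              ← Finset.mul_sum, ← Finset.mul_sum, ← Finset.mul_sum]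
        _ = ∑ ℓ, w ℓ * (z (k₁ - ℓ) * z (k₂ - ℓ)) := by
            rw [hzshift0 k₁, hzshift0 k₂, hρ1]; field_simp; ring
    -- Cauchy-Schwarz per (k₁,k₂)
    have cauchy : ∀ k₁ k₂ : ZMod L,
        (∑ ℓ, w ℓ * (z (k₁ - ℓ) * z (k₂ - ℓ))) ^ 2
          ≤ 2 * ∑ ℓ, w ℓ * (z (k₁ - ℓ) ^ 2 * z (k₂ - ℓ) ^ 2) := by
      intro k₁ k₂
      have h := Finset.sum_mul_sq_le_sq_mul_sq Finset.univ
        (fun ℓ => Real.sqrt (w ℓ))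
        (fun ℓ => Real.sqrt (w ℓ) * (z (k₁ - ℓ) * z (k₂ - ℓ)))
      have e1 : ∀ ℓ : ZMod L, Real.sqrt (w ℓ) * (Real.sqrt (w ℓ) * (z (k₁ - ℓ) * z (k₂ - ℓ)))
          = w ℓ * (z (k₁ - ℓ) * z (k₂ - ℓ)) := fun ℓ => by
        rw [← mul_assoc, Real.mul_self_sqrt (hw0 ℓ)]
      have e2 : ∀ ℓ : ZMod L, Real.sqrt (w ℓ) ^ 2 = w ℓ := fun ℓ => Real.sq_sqrt (hw0 ℓ)
      have e3 : ∀ ℓ : ZMod L, (Real.sqrt (w ℓ) * (z (k₁ - ℓ) * z (k₂ - ℓ))) ^ 2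
          = w ℓ * (z (k₁ - ℓ) ^ 2 * z (k₂ - ℓ) ^ 2) := fun ℓ => by
        rw [mul_pow, e2]; ring
      simp only [e1, e2, e3] at h
      rwa [hwsum] at h
    set Z : ℝ := ∑ i, z i ^ 2 with hZ
    have hZ0 : 0 ≤ Z := Finset.sum_nonneg fun i _ => sq_nonneg _
    have hZle : Z ≤ ∑ i, x i ^ 2 := by
      have expand : ∀ i, z i ^ 2 = x i ^ 2 - 2 * m * x i + m ^ 2 := fun i => by
        simp only [hzdef]; ring
      have : Z = (∑ i, x i ^ 2) - (L : ℝ) * m ^ 2 := by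
        rw [hZ]
        calc (∑ i, z i ^ 2) = ∑ i, (x i ^ 2 - 2 * m * x i + m ^ 2) :=
              Finset.sum_congr rfl fun i _ => expand i
          _ = (∑ i, x i ^ 2) - 2 * m * (∑ i, x i) + (L : ℝ) * m ^ 2 := by
              rw [Finset.sum_add_distrib, Finset.sum_sub_distrib, Finset.sum_const, hcard,
                nsmul_eq_mul, ← Finset.mul_sum]
          _ = (∑ i, x i ^ 2) - (L : ℝ) * m ^ 2 := by rw [hsumx]; ring
      nlinarith [mul_nonneg hL.le (sq_nonneg m)]
    have hzsq : ∀ ℓ : ZMod L, (∑ k : ZMod L, z (k - ℓ) ^ 2) = Z := fun ℓ =>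
      Fintype.sum_equiv (Equiv.subRight ℓ) _ _ (fun k => rfl)
    have step1 : ∀ k₁ : ZMod L,
        (∑ k₂ : ZMod L, ∑ ℓ, w ℓ * (z (k₁ - ℓ) ^ 2 * z (k₂ - ℓ) ^ 2))
          = ∑ ℓ, w ℓ * z (k₁ - ℓ) ^ 2 * Z := by
      intro k₁
      rw [Finset.sum_comm]
      refine Finset.sum_congr rfl fun ℓ _ => ?_
      calc (∑ k₂ : ZMod L, w ℓ * (z (k₁ - ℓ) ^ 2 * z (k₂ - ℓ) ^ 2))
          = ∑ k₂ : ZMod L, (w ℓ * z (k₁ - ℓ) ^ 2) * z (k₂ - ℓ) ^ 2 :=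
            Finset.sum_congr rfl fun _ _ => by ring
        _ = (w ℓ * z (k₁ - ℓ) ^ 2) * ∑ k₂ : ZMod L, z (k₂ - ℓ) ^ 2 := by
            rw [← Finset.mul_sum]
        _ = w ℓ * z (k₁ - ℓ) ^ 2 * Z := by rw [hzsq ℓ]
    have step2 : (∑ k₁ : ZMod L, ∑ ℓ, w ℓ * z (k₁ - ℓ) ^ 2 * Z) = ∑ ℓ, w ℓ * Z * Z := by
      rw [Finset.sum_comm]
      refine Finset.sum_congr rfl fun ℓ _ => ?_
      calc (∑ k₁ : ZMod L, w ℓ * z (k₁ - ℓ) ^ 2 * Z)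
          = ∑ k₁ : ZMod L, (w ℓ * Z) * z (k₁ - ℓ) ^ 2 :=
            Finset.sum_congr rfl fun _ _ => by ring
        _ = (w ℓ * Z) * ∑ k₁ : ZMod L, z (k₁ - ℓ) ^ 2 := by rw [← Finset.mul_sum]
        _ = w ℓ * Z * Z := by rw [hzsq ℓ]
    have main : (∑ k₁ : ZMod L, ∑ k₂ : ZMod L,
        (∑ ℓ, w ℓ * (z (k₁ - ℓ) * z (k₂ - ℓ))) ^ 2) ≤ 4 * Z ^ 2 := by
      calc (∑ k₁ : ZMod L, ∑ k₂ : ZMod L, (∑ ℓ, w ℓ * (z (k₁ - ℓ) * z (k₂ - ℓ))) ^ 2)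
          ≤ ∑ k₁ : ZMod L, ∑ k₂ : ZMod L,
              2 * ∑ ℓ, w ℓ * (z (k₁ - ℓ) ^ 2 * z (k₂ - ℓ) ^ 2) :=
            Finset.sum_le_sum fun k₁ _ => Finset.sum_le_sum fun k₂ _ => cauchy k₁ k₂
        _ = 2 * ∑ k₁ : ZMod L, ∑ k₂ : ZMod L,
              ∑ ℓ, w ℓ * (z (k₁ - ℓ) ^ 2 * z (k₂ - ℓ) ^ 2) := by
            rw [Finset.mul_sum]
            exact Finset.sum_congr rfl fun k₁ _ => by rw [Finset.mul_sum]
        _ = 2 * ∑ k₁ : ZMod L, ∑ ℓ, w ℓ * z (k₁ - ℓ) ^ 2 * Z := by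
            exact congrArg _ (Finset.sum_congr rfl fun k₁ _ => step1 k₁)
        _ = 2 * ∑ ℓ, w ℓ * Z * Z := by rw [step2]
        _ = 4 * Z ^ 2 := by
            rw [← Finset.sum_mul, ← Finset.sum_mul, hwsum]; ring
    calc (∑ k₁ : ZMod L, ∑ k₂ : ZMod L,
        (∑ ℓ, ((1 / (L : ℝ) - ρ ℓ) * (x (k₁ - ℓ) * x (k₂ - ℓ))
          + ρ ℓ * ((x (k₁ - ℓ) - m) * x (k₂ - ℓ) + x (k₁ - ℓ) * (x (k₂ - ℓ) - m)))) ^ 2)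
        = ∑ k₁ : ZMod L, ∑ k₂ : ZMod L, (∑ ℓ, w ℓ * (z (k₁ - ℓ) * z (k₂ - ℓ))) ^ 2 :=
          Finset.sum_congr rfl fun k₁ _ => Finset.sum_congr rfl fun k₂ _ => by rw [key k₁ k₂]
      _ ≤ 4 * Z ^ 2 := main
      _ ≤ 4 * Z * (∑ i, x i ^ 2) := by nlinarith
end

section
/- Fourier-ratio propagation lemma: suppose r : ℤ_L → ℂ satisfies |r[k]| = 1 for all k, r[0] = 1, and there are indices m₁,…,m_n ⊆ ℤ_L with gcd(m₁,…,m_n, L) = 1 and unit complex numbers ω̃₁,…,ω̃_n such that r[p + m_j] = ω̃_j · r[p] for all p and j. Then there exists an L-th root of unity ω with r[m] = ω^m for all m ∈ ℤ_L. -/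
/-- Fourier-ratio propagation lemma: if `r : ℤ_L → ℂ` has unit modulus,
`r[0] = 1`, and there are indices `m₁,…,m_n` with `gcd(m₁,…,m_n, L) = 1` and
unit complex numbers `ω̃ⱼ` such that `r[p + mⱼ] = ω̃ⱼ r[p]` for all `p, j`,
then `r[m] = ω^m` for some `L`-th root of unity `ω`. -/
theorem stmt_16 (L n : ℕ) [NeZero L] (r : ZMod L → ℂ)
    (hr1 : ∀ k, ‖r k‖ = 1) (hr0 : r 0 = 1)
    (m : Fin n → ZMod L) (ω' : Fin n → ℂ)
    (hω : ∀ j, ‖ω' j‖ = 1)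
    (hgcd : Nat.gcd (Finset.univ.gcd fun j => (m j).val) L = 1)
    (hrec : ∀ (p : ZMod L) (j : Fin n), r (p + m j) = ω' j * r p) :
    ∃ ω : ℂ, ω ^ L = 1 ∧ ∀ k : ZMod L, r k = ω ^ k.val := by
  have hrne : ∀ k, r k ≠ 0 := by
    intro k h
    have := hr1 k
    rw [h] at this
    simp at this
  set I : Ideal (ZMod L) := Ideal.span (Set.range m) with hI
  -- multiplicativity along I
  have key : ∀ s ∈ I, ∀ p, r (p + s) = r s * r p := by
    intro s hs
    induction hs using Submodule.span_induction with
    | mem x hx =>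
      obtain ⟨j, rfl⟩ := hx
      intro p
      have h1 : r (m j) = ω' j := by
        rw [← zero_add (m j), hrec 0 j, hr0, mul_one]
      rw [hrec p j, h1]
    | zero => intro p; simp [hr0]
    | add x y hx hy ihx ihy =>
      intro p
      have hxy : r (x + y) = r y * r x := ihy x
      calc r (p + (x + y)) = r ((p + y) + x) := by ring_nf
        _ = r x * r (p + y) := ihx _
        _ = r x * (r y * r p) := by rw [ihy]
        _ = r (x + y) * r p := by rw [hxy]; ring
    | smul c x hx ih =>
      -- first handle nat smul
      have hn : ∀ (t : ℕ) (p : ZMod L), r (p + t • x) = r (t • x) * r p := by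
        intro t
        induction t with
        | zero => intro p; simp [hr0]
        | succ t iht =>
          intro p
          have hx' : r ((t : ℕ) • x + x) = r x * r ((t : ℕ) • x) := ih _
          calc r (p + (t + 1) • x) = r ((p + t • x) + x) := by
                rw [succ_nsmul]; ring_nf
            _ = r x * r (p + t • x) := ih _
            _ = r x * (r (t • x) * r p) := by rw [iht]
            _ = r ((t + 1) • x) * r p := by
                rw [succ_nsmul, hx']; ring
      intro p
      have hcx : c • x = (c.val : ℕ) • x := by
        rw [nsmul_eq_mul]
        simp [ZMod.natCast_val, ZMod.cast_id, smul_eq_mul]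
      rw [hcx]
      exact hn _ p
  -- I = ⊤
  have hmemI : ∀ j, ((m j).val : ZMod L) ∈ I := by
    intro j
    have : ((m j).val : ZMod L) = m j := by
      simp [ZMod.natCast_val, ZMod.cast_id]
    rw [this]
    exact Ideal.subset_span ⟨j, rfl⟩
  have hg : ∀ s : Finset (Fin n), ((s.gcd fun j => (m j).val : ℕ) : ZMod L) ∈ I := by
    intro s
    induction s using Finset.induction with
    | empty => simp
    | insert a s hj ih =>
      rw [Finset.gcd_insert]
      set b := s.gcd fun j => (m j).val with hb
      have hbez : ((Nat.gcd (m a).val b : ℤ)) =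
          ((m a).val : ℤ) * Nat.gcdA (m a).val b + (b : ℤ) * Nat.gcdB (m a).val b :=
        Nat.gcd_eq_gcd_ab _ _
      have hcast : ((Nat.gcd (m a).val b : ℕ) : ZMod L) =
          ((m a).val : ZMod L) * ((Nat.gcdA (m a).val b : ℤ) : ZMod L) +
          ((b : ℕ) : ZMod L) * ((Nat.gcdB (m a).val b : ℤ) : ZMod L) := by
        have := congrArg (fun z : ℤ => (z : ZMod L)) hbez
        push_cast at this ⊢
        exact this
      have hgg : GCDMonoid.gcd (m a).val b = Nat.gcd (m a).val b := rfl
      rw [hgg, hcast]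
      exact I.add_mem (Ideal.mul_mem_right _ _ (hmemI a)) (Ideal.mul_mem_right _ _ ih)
  have hunit : IsUnit ((Finset.univ.gcd fun j => (m j).val : ℕ) : ZMod L) := by
    rw [ZMod.isUnit_iff_coprime]
    exact hgcd
  have hItop : I = ⊤ := Ideal.eq_top_of_isUnit_mem _ (hg Finset.univ) hunit
  have key' : ∀ s p, r (p + s) = r s * r p := by
    intro s p
    exact key s (hItop ▸ Submodule.mem_top) p
  refine ⟨r 1, ?_, ?_⟩
  · have hnat : ∀ t : ℕ, r (t : ZMod L) = (r 1) ^ t := by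
      intro t
      induction t with
      | zero => simpa using hr0
      | succ t ih =>
        have : ((t + 1 : ℕ) : ZMod L) = (t : ZMod L) + 1 := by push_cast; ring
        rw [this, key' 1 (t : ZMod L), ih, pow_succ]
        ring
    have := hnat L
    rw [ZMod.natCast_self] at this
    rw [← this, hr0]
  · intro k
    have hnat : ∀ t : ℕ, r (t : ZMod L) = (r 1) ^ t := by
      intro t
      induction t with
      | zero => simpa using hr0
      | succ t ih =>
        have : ((t + 1 : ℕ) : ZMod L) = (t : ZMod L) + 1 := by push_cast; ring
        rw [this, key' 1 (t : ZMod L), ih, pow_succ]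
        ring
    have hk : ((k.val : ℕ) : ZMod L) = k := by
      simp [ZMod.natCast_val, ZMod.cast_id]
    calc r k = r ((k.val : ℕ) : ZMod L) := by rw [hk]
      _ = (r 1) ^ k.val := hnat _
end
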